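/- Let μ, λ_L, α ∈ ℝ and let f : ℝ → ℝ be differentiable on (0, ∞) with f(1/x) = −f(x) for all x > 0. Set λ₁ := exp(α), λ₂ := exp(−α), λ₃ := 1, and for i ∈ {1,2} set g_i := λ_L·(f(λ₁) + f(λ₂) + f(λ₃)) + 2μ·f(λ_i). Define the 2×2 real matrices P₁ := (1/2) • ![![1, 1], ![1, 1]], P₂ := (1/2) • ![![1, −1], ![−1, 1]], and σ := g₁·f'(λ₁)·λ₁ • P₁ + g₂·f'(λ₂)·λ₂ • P₂. Then σ = (2μ·f(exp α)·f'(exp α)·exp α) • ![![0, 1], ![1, 0]]; in particular σ has zero diagonal entries (σ is an Eulerian pure shear stress with shear component s(α) = 2μ f(e^α) f'(e^α) e^α). -/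

import Mathlib

open Matrix Real

lemma sp_deriv (f : ℝ → ℝ)
    (hdiff : ∀ x ∈ Set.Ioi (0:ℝ), DifferentiableAt ℝ f x)
    (hsp : ∀ x : ℝ, 0 < x → f (1/x) = -f x) (x : ℝ) (hx : 0 < x) :
    deriv f (1/x) * (1/x) = deriv f x * x := by
  have hxi : (0:ℝ) < 1/x := by positivity
  have h1 : HasDerivAt (fun y : ℝ => f (1/y)) (deriv f (1/x) * (-(1/x^2))) x := by
    have hinv : HasDerivAt (fun y : ℝ => 1/y) (-(1/x^2)) x := by
      simpa using (hasDerivAt_inv (ne_of_gt hx)).congr_deriv (by ring)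
    exact ((hdiff _ hxi).hasDerivAt.comp x hinv)
  have h2 : HasDerivAt (fun y : ℝ => f (1/y)) (-(deriv f x)) x := by
    have : HasDerivAt (fun y : ℝ => -f y) (-(deriv f x)) x :=
      ((hdiff x hx).hasDerivAt).neg
    refine this.congr_of_eventuallyEq ?_
    filter_upwards [Ioi_mem_nhds hx] with y hy
    exact hsp y hy
  have := h1.unique h2
  field_simp at this ⊢
  nlinarith [this]

theorem hlih_sp_lfss_pure_shear (μ lamL α : ℝ) (f : ℝ → ℝ)
    (hdiff : ∀ x ∈ Set.Ioi (0:ℝ), DifferentiableAt ℝ f x)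
    (hsp : ∀ x : ℝ, 0 < x → f (1/x) = -f x) :
    let l₁ : ℝ := Real.exp α
    let l₂ : ℝ := Real.exp (-α)
    let l₃ : ℝ := 1
    let g₁ : ℝ := lamL * (f l₁ + f l₂ + f l₃) + 2*μ*(f l₁)
    let g₂ : ℝ := lamL * (f l₁ + f l₂ + f l₃) + 2*μ*(f l₂)
    let P₁ : Matrix (Fin 2) (Fin 2) ℝ := (1/2 : ℝ) • !![1, 1; 1, 1]
    let P₂ : Matrix (Fin 2) (Fin 2) ℝ := (1/2 : ℝ) • !![1, -1; -1, 1]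
    let σ : Matrix (Fin 2) (Fin 2) ℝ :=
      (g₁ * deriv f l₁ * l₁) • P₁ + (g₂ * deriv f l₂ * l₂) • P₂
    σ = (2*μ * f (Real.exp α) * deriv f (Real.exp α) * Real.exp α) • !![0, 1; 1, 0] ∧
    σ 0 0 = 0 ∧ σ 1 1 = 0 := by
  intro l₁ l₂ l₃ g₁ g₂ P₁ P₂ σ
  have hx : (0:ℝ) < Real.exp α := Real.exp_pos α
  have hinv : l₂ = 1 / l₁ := by simp [l₁, l₂, Real.exp_neg, one_div]
  have hf1 : f 1 = 0 := by have := hsp 1 one_pos; simp at this; linarith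
  have hf2 : f l₂ = - f l₁ := by rw [hinv]; exact hsp l₁ hx
  have hd : deriv f l₂ * l₂ = deriv f l₁ * l₁ := by
    rw [hinv]; exact sp_deriv f hdiff hsp l₁ hx
  have hg₂ : g₂ * deriv f l₂ * l₂ = -(g₁ * deriv f l₁ * l₁) := by
    have : g₂ = -g₁ := by simp only [g₁, g₂, l₃, hf1, hf2]; ring
    rw [this, neg_mul, neg_mul, mul_assoc, hd, mul_assoc]
  have hg₁ : g₁ * deriv f l₁ * l₁ = 2*μ * f (Real.exp α) * deriv f (Real.exp α) * Real.exp α := by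
    simp only [g₁, l₁, l₃, hf1, hf2]
    ring
  have hσ : σ = (2*μ * f (Real.exp α) * deriv f (Real.exp α) * Real.exp α) • !![0, 1; 1, 0] := by
    show (g₁ * deriv f l₁ * l₁) • P₁ + (g₂ * deriv f l₂ * l₂) • P₂ = _
    rw [hg₂, ← hg₁]
    ext i j
    fin_cases i <;> fin_cases j <;>
      simp [P₁, P₂, Matrix.add_apply, Matrix.smul_apply] <;> ring
  exact ⟨hσ, by rw [hσ]; simp, by rw [hσ]; simp⟩
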